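/- Suppose {L_i | i ∈ ℤ} spans a Lie algebra with brackets [L_i, L_j] = (i − j) L_{i+j} (the centerless Virasoro / Witt algebra), and let c be a scalar. Define T_m := L_{m+1} − 4c L_{m−1} for m ≥ 0. Then [T_m, T_n] = (m − n)(L_{m+n+2} − 8c L_{m+n} + 16c² L_{m+n−2}) = (m−n) T_{m+n+1} − 4c(m−n) T_{m+n−1}; in particular the map ∂/∂t_m* ↦ T_m from the additional symmetry flows of the c-1 constrained KP hierarchy, with [∂/∂t_m*, ∂/∂t_n*] = (m−n) ∂/∂t_{m+n+1}* − 4c(m−n) ∂/∂t_{m+n−1}*, is a Lie algebra homomorphism into the Witt algebra. -/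
import Mathlib


/-- In the Witt (centerless Virasoro) algebra with `[L_i, L_j] = (i−j)L_{i+j}`,
let `T_m := L_{m+1} − 4c L_{m−1}` for `m ≥ 0`.  Then
`[T_m, T_n] = (m−n)(L_{m+n+2} − 8c L_{m+n} + 16c² L_{m+n−2})
            = (m−n) T_{m+n+1} − 4c(m−n) T_{m+n−1}`;
in particular `∂/∂t_m* ↦ T_m` realizes the additional-symmetry relations
`[∂/∂t_m*, ∂/∂t_n*] = (m−n)∂/∂t_{m+n+1}* − 4c(m−n)∂/∂t_{m+n−1}*` inside the Witt
algebra, i.e. is a Lie algebra homomorphism. -/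
theorem stmt9 {V : Type*} [LieRing V] [LieAlgebra ℚ V]
    (L : ℤ → V)
    (hWitt : ∀ i j : ℤ, ⁅L i, L j⁆ = ((i - j : ℤ) : ℚ) • L (i + j))
    (c : ℚ)
    (T : ℤ → V) (hT : ∀ m : ℤ, T m = L (m + 1) - (4 * c) • L (m - 1)) :
    ∀ m n : ℤ, 0 ≤ m → 0 ≤ n →
      (⁅T m, T n⁆
          = ((m - n : ℤ) : ℚ) •
              (L (m + n + 2) - (8 * c) • L (m + n) + (16 * c ^ 2) • L (m + n - 2)))
      ∧ (⁅T m, T n⁆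
          = ((m - n : ℤ) : ℚ) • T (m + n + 1)
              - (4 * c * ((m - n : ℤ) : ℚ)) • T (m + n - 1)) := by
  intro m n _ _
  have key : ⁅T m, T n⁆
      = ((m - n : ℤ) : ℚ) •
          (L (m + n + 2) - (8 * c) • L (m + n) + (16 * c ^ 2) • L (m + n - 2)) := by
    rw [hT, hT, lie_sub, sub_lie, sub_lie, lie_smul, lie_smul, smul_lie, smul_lie,
      hWitt, hWitt, hWitt, hWitt]
    have e1 : m + 1 + (n + 1) = m + n + 2 := by ring
    have e2 : m - 1 + (n + 1) = m + n := by ring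
    have e3 : m + 1 + (n - 1) = m + n := by ring
    have e4 : m - 1 + (n - 1) = m + n - 2 := by ring
    rw [e1, e2, e3, e4]
    push_cast
    module
  refine ⟨key, ?_⟩
  rw [key, hT, hT]
  have e1 : m + n + 1 + 1 = m + n + 2 := by ring
  have e2 : m + n + 1 - 1 = m + n := by ring
  have e3 : m + n - 1 + 1 = m + n := by ring
  have e4 : m + n - 1 - 1 = m + n - 2 := by ring
  rw [e1, e2, e3, e4]
  module
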